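/- Suppose coefficients c: N·Z^2 → C satisfy, for all k, n ∈ N·Z^2, the relation (A + n' + b·k')(c(n) − c(k+n)) = 0, where for λ ∈ N·Z^2 we write λ' = ⟨∂', λ⟩ for a fixed nonzero linear functional ∂' on Z^2 extended to C^2, A ∈ C is a fixed constant, and b ∈ C. Then c is constant: c(n) = c(k+n) for all k, n ∈ N·Z^2. -/
import Mathlib

/-- There is an integer avoiding three linear conditions with nonzero leading coefficients. -/
lemma exists_int_avoid (α₁ α₂ α₃ β₁ β₂ β₃ : ℂ) (h1 : α₁ ≠ 0) (h2 : α₂ ≠ 0) (h3 : α₃ ≠ 0) :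
    ∃ t : ℤ, (t : ℂ) * α₁ + β₁ ≠ 0 ∧ (t : ℂ) * α₂ + β₂ ≠ 0 ∧ (t : ℂ) * α₃ + β₃ ≠ 0 := by
  have hinf : (Set.range ((↑) : ℤ → ℂ)).Infinite :=
    Set.infinite_range_of_injective Int.cast_injective
  have hfin : ({-β₁ / α₁, -β₂ / α₂, -β₃ / α₃} : Set ℂ).Finite := Set.toFinite _
  obtain ⟨z, hz, hz'⟩ := (hinf.diff hfin).nonempty
  obtain ⟨t, rfl⟩ := hz
  simp only [Set.mem_insert_iff, Set.mem_singleton_iff, not_or] at hz'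
  refine ⟨t, ?_, ?_, ?_⟩ <;> intro hc
  · exact hz'.1 ((eq_div_iff h1).mpr (by linear_combination hc))
  · exact hz'.2.1 ((eq_div_iff h2).mpr (by linear_combination hc))
  · exact hz'.2.2 ((eq_div_iff h3).mpr (by linear_combination hc))

/-- Abstract version: if `φ` is additive, `ℤ`-homogeneous, nonzero at some point, and `c`
jumps only where `A + φ n + b φ k = 0`, then `c` is constant. -/
lemma aux_const (φ : ℤ × ℤ → ℂ) (hadd : ∀ a b : ℤ × ℤ, φ (a + b) = φ a + φ b)
    (hsmul : ∀ (t : ℤ) (a : ℤ × ℤ), φ (t • a) = (t : ℂ) * φ a)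
    (j₀ : ℤ × ℤ) (he : φ j₀ ≠ 0) (A b : ℂ) (c : ℤ × ℤ → ℂ)
    (hstep : ∀ k n : ℤ × ℤ, A + φ n + b * φ k ≠ 0 → c n = c (k + n)) :
    ∀ k n : ℤ × ℤ, c n = c (k + n) := by
  intro k n
  by_cases hb : b = 0
  · subst hb
    by_cases hA : A + φ n = 0
    · -- use the auxiliary point j₀ + n where A + φ(j₀+n) = φ j₀ ≠ 0
      have hAj : ∀ m : ℤ × ℤ, A + φ (j₀ + n) + 0 * φ m ≠ 0 := by
        intro m
        rw [hadd]
        intro hc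
        apply he
        linear_combination hc - hA
      have h1 : c (j₀ + n) = c (-j₀ + (j₀ + n)) := hstep (-j₀) (j₀ + n) (hAj _)
      have h2 : c (j₀ + n) = c ((k - j₀) + (j₀ + n)) := hstep (k - j₀) (j₀ + n) (hAj _)
      have e1 : -j₀ + (j₀ + n) = n := by abel
      have e2 : (k - j₀) + (j₀ + n) = k + n := by abel
      rw [e1] at h1
      rw [e2] at h2
      exact h1.symm.trans h2
    · exact hstep k n (by simpa using hA)
  · -- b ≠ 0 : choose t avoiding three bad values
    obtain ⟨t, h1, h2, h3⟩ := exists_int_avoid (b * φ j₀) (b * φ j₀) (φ j₀)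
      (A + φ n) (A + φ (k + n)) (A + φ n + b * φ k)
      (mul_ne_zero hb he) (mul_ne_zero hb he) he
    set j : ℤ × ℤ := t • j₀ with hj
    have hφj : φ j = (t : ℂ) * φ j₀ := hsmul t j₀
    have C1 : A + φ n + b * φ j ≠ 0 := by
      rw [hφj]; intro hc; exact h1 (by linear_combination hc)
    have C2 : A + φ (k + n) + b * φ j ≠ 0 := by
      rw [hφj]; intro hc; exact h2 (by linear_combination hc)
    have C3 : A + φ (j + n) + b * φ k ≠ 0 := by
      rw [hadd, hφj]; intro hc; exact h3 (by linear_combination hc)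
    have s1 : c n = c (j + n) := hstep j n C1
    have s2 : c (j + n) = c (k + (j + n)) := hstep k (j + n) C3
    have s3 : c (k + n) = c (j + (k + n)) := hstep j (k + n) C2
    have e : j + (k + n) = k + (j + n) := by abel
    rw [e] at s3
    exact (s1.trans s2).trans s3.symm

/-- Relation (2.9) implies (2.10): if coefficients `c : N·ℤ² → ℂ` (indexed here by
`n ↦ c n` for the lattice point `N·n`) satisfy
`(A + ⟨∂', N·n⟩ + b⟨∂', N·k⟩)(c n − c (k+n)) = 0` for all `k, n`, where `∂' ≠ 0` is a
linear functional, then `c` is constant: `c n = c (k+n)` for all `k, n`. -/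
theorem stmt_10 (N : ℕ) (hN : 2 ≤ N) (d : ℂ × ℂ) (hd : d ≠ 0)
    (A b : ℂ) (c : ℤ × ℤ → ℂ)
    (h : ∀ k n : ℤ × ℤ,
      (A + (d.1 * ((N : ℂ) * (n.1 : ℂ)) + d.2 * ((N : ℂ) * (n.2 : ℂ)))
          + b * (d.1 * ((N : ℂ) * (k.1 : ℂ)) + d.2 * ((N : ℂ) * (k.2 : ℂ))))
        * (c n - c (k + n)) = 0) :
    ∀ k n : ℤ × ℤ, c n = c (k + n) := by
  have hNne : (N : ℂ) ≠ 0 := by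
    exact_mod_cast Nat.cast_ne_zero.mpr (by omega)
  set φ : ℤ × ℤ → ℂ :=
    fun m => d.1 * ((N : ℂ) * (m.1 : ℂ)) + d.2 * ((N : ℂ) * (m.2 : ℂ)) with hφ
  have hadd : ∀ a b : ℤ × ℤ, φ (a + b) = φ a + φ b := by
    intro a b
    simp only [hφ, Prod.fst_add, Prod.snd_add]
    push_cast
    ring
  have hsmul : ∀ (t : ℤ) (a : ℤ × ℤ), φ (t • a) = (t : ℂ) * φ a := by
    intro t a
    simp only [hφ, Prod.smul_fst, Prod.smul_snd, smul_eq_mul]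
    push_cast
    ring
  have hd' : d.1 ≠ 0 ∨ d.2 ≠ 0 := by
    by_contra hcon
    push_neg at hcon
    exact hd (Prod.ext hcon.1 hcon.2)
  obtain ⟨j₀, he⟩ : ∃ j₀ : ℤ × ℤ, φ j₀ ≠ 0 := by
    rcases hd' with h1 | h2
    · exact ⟨(1, 0), by simp [hφ]; exact ⟨h1, by omega⟩⟩
    · exact ⟨(0, 1), by simp [hφ]; exact ⟨h2, by omega⟩⟩
  have hstep : ∀ k n : ℤ × ℤ, A + φ n + b * φ k ≠ 0 → c n = c (k + n) := by
    intro k n hne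
    have hkn := h k n
    rcases mul_eq_zero.mp hkn with h' | h'
    · exact absurd h' hne
    · exact sub_eq_zero.mp h'
  exact aux_const φ hadd hsmul j₀ he A b c hstep
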